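/- Thue–Morse square-free words: let f : {a, b, c}* → {a, b, c}* be the monoid homomorphism determined by f(a) = abc, f(b) = ac, f(c) = b. Then for every i ∈ ℕ, the word f^i(a) (the i-fold iterate of f applied to the single-letter word a) is square-free. -/

import Mathlib

/-- The Thue–Morse substitution on the three-letter alphabet `Fin 3`
(with `0 = a`, `1 = b`, `2 = c`): `a ↦ abc`, `b ↦ ac`, `c ↦ b`. -/
def tmStep : Fin 3 → List (Fin 3)
  | 0 => [0, 1, 2]
  | 1 => [0, 2]
  | 2 => [1]

/-- The monoid homomorphism on words over `{a, b, c}` determined by `tmStep`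
(applying the substitution letter by letter and concatenating). -/
def tmSub (w : List (Fin 3)) : List (Fin 3) := w.flatMap tmStep

/-- A word is square-free if it has no nonempty contiguous subword of the
form `v v`. -/
def SquareFree (w : List (Fin 3)) : Prop :=
  ∀ v : List (Fin 3), v ≠ [] → ¬ (v ++ v) <:+: w

namespace TMaux

/-! ### The Thue–Morse sequence as a function on ℕ -/

def t : ℕ → Bool
  | 0 => false
  | (n+1) => if (n+1) % 2 = 1 then !(t ((n+1)/2)) else t ((n+1)/2)
decreasing_by all_goals exact Nat.div_lt_self (Nat.succ_pos n) one_lt_two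

lemma t_zero : t 0 = false := by simp [t]

lemma t_succ (n : ℕ) : t (n+1) = if (n+1) % 2 = 1 then !(t ((n+1)/2)) else t ((n+1)/2) := by
  rw [t]

lemma t_two_mul (n : ℕ) : t (2*n) = t n := by
  cases n with
  | zero => simp [t]
  | succ m =>
    have h : 2*(m+1) = (2*m+1)+1 := by ring
    have h1 : ¬((2*m+1+1) % 2 = 1) := by omega
    have h2 : (2*m+1+1)/2 = m+1 := by omega
    rw [h, t_succ, if_neg h1, h2]

lemma t_two_mul_add_one (n : ℕ) : t (2*n+1) = !(t n) := by
  have h1 : (2*n+1) % 2 = 1 := by omega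
  have h2 : (2*n+1)/2 = n := by omega
  rw [t_succ, if_pos h1, h2]

lemma t_even_ne (m : ℕ) : t (2*m) ≠ t (2*m+1) := by
  rw [t_two_mul, t_two_mul_add_one]
  cases t m <;> simp

lemma t_four (k : ℕ) : t (4*k+1) = t (4*k+2) := by
  have e1 : 4*k+1 = 2*(2*k)+1 := by ring
  have e2 : 4*k+2 = 2*(2*k+1) := by ring
  rw [e1, e2, t_two_mul_add_one, t_two_mul, t_two_mul, t_two_mul_add_one]

lemma t_ne_succ (n : ℕ) (h : n % 2 = 0) : t n ≠ t (n+1) := by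
  obtain ⟨m, rfl⟩ : ∃ m, n = 2*m := ⟨n/2, by omega⟩
  exact t_even_ne m

/-! ### The Thue–Morse sequence is overlap-free -/

lemma no_overlap : ∀ p, 0 < p → ∀ i, ¬ (∀ j, j ≤ p → t (i+j) = t (i+p+j)) := by
  intro p
  induction p using Nat.strong_induction_on with
  | _ p IH =>
  intro hp i H
  rcases Nat.even_or_odd p with ⟨q, hq⟩ | ⟨q, hq⟩
  · -- p = q + q, even
    have hq1 : 0 < q := by omega
    apply IH q (by omega) hq1 (i/2)
    intro j hj
    have h1 := H (2*j) (by omega)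
    rcases Nat.even_or_odd i with ⟨m, hm⟩ | ⟨m, hm⟩
    · have e1 : i + 2*j = 2*(m+j) := by omega
      have e2 : i + p + 2*j = 2*(m+q+j) := by omega
      have e3 : i/2 + j = m + j := by omega
      have e4 : i/2 + q + j = m + q + j := by omega
      rw [e1, e2, t_two_mul, t_two_mul] at h1
      rw [e3, e4]; exact h1
    · have e1 : i + 2*j = 2*(m+j)+1 := by omega
      have e2 : i + p + 2*j = 2*(m+q+j)+1 := by omega
      have e3 : i/2 + j = m + j := by omega
      have e4 : i/2 + q + j = m + q + j := by omega
      rw [e1, e2, t_two_mul_add_one, t_two_mul_add_one] at h1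
      rw [e3, e4]
      simpa using h1
  · -- p = 2q+1, odd
    by_cases h5 : 5 ≤ p
    · obtain ⟨k, hk1, hk2⟩ : ∃ k, i ≤ 4*k+1 ∧ 4*k+1 ≤ i + 4 := ⟨(i+3)/4, by omega, by omega⟩
      have h1 := H (4*k+1 - i) (by omega)
      have h2 := H (4*k+2 - i) (by omega)
      rw [show i + (4*k+1-i) = 4*k+1 by omega, show i+p+(4*k+1-i) = 4*k+1+p by omega] at h1
      rw [show i + (4*k+2-i) = 4*k+2 by omega, show i+p+(4*k+2-i) = 4*k+2+p by omega] at h2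
      have key : t (4*k+1+p) = t (4*k+2+p) := by rw [← h1, ← h2]; exact t_four k
      rw [show 4*k+2+p = (4*k+1+p)+1 by omega] at key
      exact t_ne_succ _ (by omega) key
    · have hp13 : p = 1 ∨ p = 3 := by omega
      rcases hp13 with rfl | rfl
      · -- p = 1
        rcases Nat.even_or_odd i with ⟨m, hm⟩ | ⟨m, hm⟩
        · have h1 := H 0 (by omega)
          rw [show i + 0 = i by omega, show i+1+0 = i+1 by omega] at h1
          exact t_ne_succ i (by omega) h1
        · have h1 := H 1 (by omega)
          rw [show i + 1 + 1 = (i+1)+1 by omega] at h1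
          exact t_ne_succ (i+1) (by omega) h1
      · -- p = 3
        obtain ⟨k, hki, hke⟩ : ∃ k, (i ≤ k ∧ k ≤ i + 1) ∧ k % 2 = 0 := by
          rcases Nat.even_or_odd i with ⟨m, hm⟩ | ⟨m, hm⟩
          · exact ⟨i, by omega, by omega⟩
          · exact ⟨i+1, by omega, by omega⟩
        have h0 := H (k-i) (by omega)
        have h1 := H (k+1-i) (by omega)
        have h2 := H (k+2-i) (by omega)
        rw [show i + (k-i) = k by omega, show i+3+(k-i) = k+3 by omega] at h0
        rw [show i + (k+1-i) = k+1 by omega, show i+3+(k+1-i) = (k+3)+1 by omega] at h1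
        rw [show i + (k+2-i) = k+2 by omega, show i+3+(k+2-i) = ((k+3)+1)+1 by omega] at h2
        have e0 : t k ≠ t (k+1) := t_ne_succ k (by omega)
        have e1 : t (k+2) ≠ t (k+2+1) := t_ne_succ (k+2) (by omega)
        have e2 : t (k+3+1) ≠ t (k+3+1+1) := t_ne_succ (k+3+1) (by omega)
        rw [show k+2+1 = k+3 by omega] at e1
        rw [h1] at e0
        rw [← h2] at e2
        rw [← h0] at e1
        revert e0 e1 e2
        cases t k <;> cases t (k+2) <;> cases t (k+3+1) <;> simp

/-! ### The Thue–Morse words as lists -/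

def mu (w : List Bool) : List Bool := w.flatMap (fun b => [b, !b])

lemma mu_append (x y : List Bool) : mu (x ++ y) = mu x ++ mu y := by
  simp [mu]

lemma mu_map_not (w : List Bool) : mu (w.map (!·)) = (mu w).map (!·) := by
  induction w with
  | nil => rfl
  | cons a w ih => simp [mu] at ih ⊢; simp [ih]

def T (N : ℕ) : List Bool := mu^[N] [false]

lemma T_succ (N : ℕ) : T (N+1) = mu (T N) := Function.iterate_succ_apply' mu N [false]

lemma T_append (N : ℕ) : T (N+1) = T N ++ (T N).map (!·) := by
  induction N with
  | zero => rfl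
  | succ N ih =>
    conv_lhs => rw [T_succ, ih]
    rw [mu_append, mu_map_not, ← T_succ]

lemma T_length (N : ℕ) : (T N).length = 2^N := by
  induction N with
  | zero => rfl
  | succ N ih => rw [T_append]; simp [ih]; ring

lemma t_pow_add : ∀ N m, m < 2^N → t (2^N + m) = !(t m) := by
  intro N
  induction N with
  | zero =>
    intro m hm
    interval_cases m
    rw [show 2^0 + 0 = 2*0+1 by norm_num, t_two_mul_add_one]
  | succ N ih =>
    intro m hm
    rcases Nat.even_or_odd m with ⟨r, hr⟩ | ⟨r, hr⟩
    · rw [show 2^(N+1) + m = 2*(2^N + r) by omega, t_two_mul, ih r (by omega),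
        show m = 2*r by omega, t_two_mul]
    · rw [show 2^(N+1) + m = 2*(2^N + r)+1 by omega, t_two_mul_add_one, ih r (by omega),
        show m = 2*r+1 by omega, t_two_mul_add_one, Bool.not_not]

lemma T_get : ∀ N n, n < (T N).length → (T N)[n]? = some (t n) := by
  intro N
  induction N with
  | zero =>
    intro n hn
    simp only [T, Function.iterate_zero, id_eq, List.length_singleton] at hn ⊢
    have : n = 0 := by omega
    subst this
    simp [t_zero]
  | succ N ih =>
    intro n hn
    have hL : (T N).length = 2^N := T_length N
    rw [T_append, List.length_append, List.length_map] at hn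
    rw [T_append]
    by_cases h : n < (T N).length
    · rw [List.getElem?_append_left h]
      exact ih n h
    · rw [List.getElem?_append_right (by omega), List.getElem?_map,
        ih (n - (T N).length) (by omega)]
      have e : t n = !(t (n - (T N).length)) := by
        have hn2 : n = 2^N + (n - (T N).length) := by omega
        conv_lhs => rw [hn2]
        rw [t_pow_add N _ (by omega)]
      rw [e]
      rfl

/-! ### Mapping ternary words to binary words -/

def phil : Fin 3 → List Bool
  | 0 => [false, true, true]
  | 1 => [false, true]
  | 2 => [false]

def phi (w : List (Fin 3)) : List Bool := w.flatMap phil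

lemma phi_append (x y : List (Fin 3)) : phi (x ++ y) = phi x ++ phi y := by
  simp [phi]

lemma phi_tmSub (w : List (Fin 3)) : phi (tmSub w) = mu (phi w) := by
  induction w with
  | nil => rfl
  | cons a w ih =>
    have h1 : tmSub (a :: w) = tmStep a ++ tmSub w := by simp [tmSub]
    have h2 : phi (a :: w) = phil a ++ phi w := by simp [phi]
    rw [h1, phi_append, h2, mu_append, ih]
    congr 1
    fin_cases a <;> rfl

lemma phi_iter (i : ℕ) : phi (tmSub^[i] [0]) = mu^[i] (phi [0]) := by
  induction i with
  | zero => rfl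
  | succ i ih =>
    rw [Function.iterate_succ_apply', Function.iterate_succ_apply', phi_tmSub, ih]

lemma mu_iter_append (n : ℕ) (x y : List Bool) :
    mu^[n] (x ++ y) = mu^[n] x ++ mu^[n] y := by
  induction n generalizing x y with
  | zero => rfl
  | succ n ih =>
    simp only [Function.iterate_succ_apply, mu_append, ih]

lemma T_split (i : ℕ) : T (i+2) = phi (tmSub^[i] [0]) ++ T i := by
  have h1 : T (i+2) = mu^[i] (T 2) := Function.iterate_add_apply mu i 2 [false]
  have h2 : T 2 = [false, true, true] ++ [false] := rfl
  rw [h1, h2, phi_iter, mu_iter_append]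
  rfl

lemma T_head (i : ℕ) : ∃ r, T i = false :: r := by
  induction i with
  | zero => exact ⟨[], rfl⟩
  | succ i ih =>
    obtain ⟨r, hr⟩ := ih
    exact ⟨true :: mu r, by rw [T_succ, hr]; rfl⟩

lemma phi_cons_head : ∀ v : List (Fin 3), v ≠ [] → ∃ u', phi v = false :: u' := by
  intro v hv
  cases v with
  | nil => exact absurd rfl hv
  | cons a w =>
    have h2 : phi (a :: w) = phil a ++ phi w := by simp [phi]
    fin_cases a <;> exact ⟨_, by rw [h2]; rfl⟩

end TMaux

/-- Thue–Morse: every iterate `f^i(a)` of the substitution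
`a ↦ abc, b ↦ ac, c ↦ b` applied to the one-letter word `a` is square-free. -/
theorem thue_morse_iterates_square_free (i : ℕ) : SquareFree (tmSub^[i] [0]) := by
  intro v hv hinf
  obtain ⟨x, y, hxy⟩ := hinf
  obtain ⟨r, hr⟩ := TMaux.T_head i
  obtain ⟨u', hu'⟩ := TMaux.phi_cons_head v hv
  set u := TMaux.phi v with hu
  obtain ⟨s, hs⟩ : ∃ s, TMaux.phi y ++ (false :: r) = false :: s := by
    cases y with
    | nil => exact ⟨r, rfl⟩
    | cons b y' =>
      obtain ⟨w', hw'⟩ := TMaux.phi_cons_head (b :: y') (by simp)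
      exact ⟨w' ++ (false :: r), by rw [hw']; simp⟩
  have hT : TMaux.T (i+2) = TMaux.phi x ++ (u ++ (u ++ (false :: s))) := by
    rw [TMaux.T_split, ← hxy, hr]
    simp only [TMaux.phi_append, List.append_assoc, hs]
    rfl
  set p := u.length with hp
  have hp0 : 0 < p := by
    rw [hp, hu']; simp
  apply TMaux.no_overlap p hp0 (TMaux.phi x).length
  intro j hj
  set A := u ++ (u ++ (false :: s)) with hA
  have lenT : (TMaux.T (i+2)).length = (TMaux.phi x).length + (2*p + 1 + s.length) := by
    rw [hT]; simp [hA]; omega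
  have key : ∀ n, n ≤ 2*p → (TMaux.T (i+2))[(TMaux.phi x).length + n]? = A[n]? := by
    intro n hn
    rw [hT, List.getElem?_append_right (by omega)]
    congr 1
    omega
  have hAj : A[j]? = A[p+j]? := by
    rcases Nat.lt_or_ge j p with h | h
    · rw [hA, List.getElem?_append_left h,
        List.getElem?_append_right (show u.length ≤ p + j by omega)]
      rw [show p + j - u.length = j from by omega, List.getElem?_append_left h]
    · have hjp : j = p := by omega
      subst hjp
      have c1 : A[p]? = some false := by
        rw [hA, List.getElem?_append_right (show u.length ≤ p from le_refl _),
          show p - u.length = 0 from by omega,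
          List.getElem?_append_left (show 0 < u.length from hp0), hu']
        simp
      have c2 : A[p+p]? = some false := by
        rw [hA, List.getElem?_append_right (show u.length ≤ p+p from by omega),
          show p + p - u.length = p from by omega,
          List.getElem?_append_right (show u.length ≤ p from le_refl _),
          show p - u.length = 0 from by omega]
        simp
      rw [c1, c2]
  have e1 := TMaux.T_get (i+2) ((TMaux.phi x).length + j) (by omega)
  have e2 := TMaux.T_get (i+2) ((TMaux.phi x).length + p + j) (by omega)
  rw [key j (by omega)] at e1
  rw [show (TMaux.phi x).length + p + j = (TMaux.phi x).length + (p + j) from by omega,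
    key (p+j) (by omega)] at e2
  rw [hAj, e2] at e1
  have := Option.some_injective _ e1.symm
  rw [Nat.add_assoc]
  exact this
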